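/- arXiv:0909.0598 — 5 statements merged into one kernel-verified Lean document; each statement's English description precedes it below -/
import Mathlib

section
/- Let F = GF(2^m) with m ≥ 2 and let R be the set of polynomials in F of degree at most m−2. Then the sets (x+1)·R and (x^{m-1}+x+1) + (x+1)·R are disjoint and their union is GF(2^m). -/
open Polynomial

lemma stmt2_geom (n : ℕ) :
    (X + 1 : Polynomial (ZMod 2)) * ((∑ i ∈ Finset.range (n+1), X^i) + 1) = X^(n+1) + X := by
  have h := geom_sum_mul (X : Polynomial (ZMod 2)) (n+1)
  have h2 : (2 : Polynomial (ZMod 2)) = 0 := CharTwo.two_eq_zero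
  linear_combination h + (∑ i ∈ Finset.range (n+1), (X:Polynomial (ZMod 2))^i) * h2

/-- In F = GF(2^m) (m ≥ 2), with R the polynomials of degree at most m−2,
the sets (x+1)·R and (x^{m-1}+x+1) + (x+1)·R are disjoint and their union is F. -/
theorem stmt2 (m : ℕ) (hm : 2 ≤ m) (p : Polynomial (ZMod 2)) (hp : Irreducible p)
    (hdeg : p.natDegree = m) :
    Disjoint
      ((fun r => (AdjoinRoot.root p + 1) * r) ''
        ((AdjoinRoot.mk p) '' {q : Polynomial (ZMod 2) | q.natDegree ≤ m - 2}))
      ((fun r => ((AdjoinRoot.root p) ^ (m - 1) + AdjoinRoot.root p + 1)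
          + (AdjoinRoot.root p + 1) * r) ''
        ((AdjoinRoot.mk p) '' {q : Polynomial (ZMod 2) | q.natDegree ≤ m - 2}))
    ∧
    ((fun r => (AdjoinRoot.root p + 1) * r) ''
        ((AdjoinRoot.mk p) '' {q : Polynomial (ZMod 2) | q.natDegree ≤ m - 2}))
      ∪
      ((fun r => ((AdjoinRoot.root p) ^ (m - 1) + AdjoinRoot.root p + 1)
          + (AdjoinRoot.root p + 1) * r) ''
        ((AdjoinRoot.mk p) '' {q : Polynomial (ZMod 2) | q.natDegree ≤ m - 2}))
      = Set.univ := by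
  obtain ⟨k, rfl⟩ : ∃ k, m = k + 2 := ⟨m - 2, by omega⟩
  have hp0 : p ≠ 0 := hp.ne_zero
  have hpm : p.Monic := by
    have hl : p.leadingCoeff ≠ 0 := leadingCoeff_ne_zero.mpr hp0
    have : ∀ c : ZMod 2, c ≠ 0 → c = 1 := by decide
    exact this _ hl
  have hXm : Monic (X + 1 : Polynomial (ZMod 2)) := by
    simpa using monic_X_add_C (1 : ZMod 2)
  have h2 : (2 : Polynomial (ZMod 2)) = 0 := CharTwo.two_eq_zero
  have h2F : (2 : AdjoinRoot p) = 0 := by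
    have hm2 : (2 : AdjoinRoot p) = AdjoinRoot.mk p 2 := (map_ofNat _ 2).symm
    rw [hm2, h2, map_zero]
  have hms1 : k + 2 - 1 = k + 1 := by omega
  have hms2 : k + 2 - 2 = k := by omega
  rw [hms1, hms2]
  set α := AdjoinRoot.root p with hα
  -- key degree fact
  have hkey : ∀ g : Polynomial (ZMod 2), AdjoinRoot.mk p g = 0 → g.natDegree ≤ k + 1 →
      g.eval 1 ≠ 0 → False := by
    intro g hg hgd hge
    have hdvd : p ∣ g := by rwa [AdjoinRoot.mk_eq_zero] at hg
    have hg0 : g ≠ 0 := by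
      intro h; rw [h] at hge; simp at hge
    have := Polynomial.natDegree_le_natDegree (Polynomial.degree_le_of_dvd hdvd hg0)
    omega
  constructor
  · rw [Set.disjoint_left]
    rintro y ⟨_, ⟨q1, hq1, rfl⟩, rfl⟩ ⟨_, ⟨q2, hq2, rfl⟩, heq⟩
    simp only [Set.mem_setOf_eq] at hq1 hq2
    set g : Polynomial (ZMod 2) := (X + 1) * (q1 - q2) - (X ^ (k+1) + X + 1) with hgdef
    have hmk : AdjoinRoot.mk p g = 0 := by
      have h1 : (α + 1) * AdjoinRoot.mk p q1
          = α ^ (k+1) + α + 1 + (α + 1) * AdjoinRoot.mk p q2 := heq.symm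
      simp only [hgdef, map_sub, map_mul, map_add, map_pow, map_one, AdjoinRoot.mk_X, ← hα]
      linear_combination h1
    have hgd : g.natDegree ≤ k + 1 := by
      apply le_trans (natDegree_sub_le _ _)
      have ha : ((X + 1 : Polynomial (ZMod 2)) * (q1 - q2)).natDegree ≤ k + 1 := by
        apply le_trans (natDegree_mul_le)
        have : (X + 1 : Polynomial (ZMod 2)).natDegree ≤ 1 := by
          simpa using (natDegree_X_add_C (1 : ZMod 2)).le
        have hsub : (q1 - q2).natDegree ≤ k := le_trans (natDegree_sub_le _ _) (by omega)
        omega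
      have hb : ((X : Polynomial (ZMod 2)) ^ (k+1) + X + 1).natDegree ≤ k + 1 := by
        have h1 : ((X : Polynomial (ZMod 2)) ^ (k+1) + X).natDegree ≤ k + 1 := by
          apply le_trans (natDegree_add_le _ _)
          simp [natDegree_X_pow, natDegree_X]
        apply le_trans (natDegree_add_le _ _)
        simpa [natDegree_one] using h1
      omega
    have hge : g.eval 1 ≠ 0 := by
      have e2 : (1 + 1 : ZMod 2) = 0 := by decide
      simp only [hgdef, eval_sub, eval_mul, eval_add, eval_pow, eval_X, eval_one, one_pow,
        e2, zero_mul, zero_add, zero_sub, neg_ne_zero]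
      decide
    exact hkey g hmk hgd hge
  · ext y
    simp only [Set.mem_union, Set.mem_univ, iff_true]
    obtain ⟨f0, rfl⟩ := AdjoinRoot.mk_surjective y
    set f : Polynomial (ZMod 2) := f0 %ₘ p with hfdef
    have hmkf : AdjoinRoot.mk p f = AdjoinRoot.mk p f0 := by
      rw [hfdef, modByMonic_eq_sub_mul_div _ p]
      simp
    have hfd : f.natDegree ≤ k + 1 := by
      by_cases hf0 : f = 0
      · simp [hf0]
      · have := natDegree_lt_natDegree hf0 (degree_modByMonic_lt f0 hpm)
        omega
    set q : Polynomial (ZMod 2) := f /ₘ (X + 1) with hqdef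
    set r : Polynomial (ZMod 2) := f %ₘ (X + 1) with hrdef
    have hfe : r + (X + 1) * q = f := modByMonic_add_div f (X + 1)
    have hqd : q.natDegree ≤ k := by
      rw [hqdef, natDegree_divByMonic f hXm]
      have : (X + 1 : Polynomial (ZMod 2)).natDegree = 1 := by
        simpa using natDegree_X_add_C (1 : ZMod 2)
      omega
    have hrC : r = C (r.coeff 0) := by
      apply eq_C_of_degree_le_zero
      have := degree_modByMonic_lt f hXm
      have h1 : (X + 1 : Polynomial (ZMod 2)).degree = 1 := by
        simpa using degree_X_add_C (1 : ZMod 2)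
      rw [h1] at this
      exact Nat.WithBot.lt_one_iff_le_zero.mp this
    have hc : r.coeff 0 = 0 ∨ r.coeff 0 = 1 := by
      have : ∀ c : ZMod 2, c = 0 ∨ c = 1 := by decide
      exact this _
    rcases hc with hc | hc
    · left
      refine ⟨AdjoinRoot.mk p q, ⟨q, hqd, rfl⟩, ?_⟩
      rw [← hmkf, ← hfe, hrC, hc]
      simp [hα]
    · right
      set s : Polynomial (ZMod 2) := (∑ i ∈ Finset.range (k+1), X^i) + 1 with hsdef
      have hsd : s.natDegree ≤ k := by
        apply le_trans (natDegree_add_le _ _)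
        simp only [natDegree_one]
        have : (∑ i ∈ Finset.range (k+1), (X:Polynomial (ZMod 2))^i).natDegree ≤ k := by
          apply natDegree_sum_le_of_forall_le
          intro i hi
          simp only [Finset.mem_range] at hi
          simpa using Nat.lt_succ_iff.mp (by simpa [natDegree_X_pow] using hi)
        omega
      have hqs : (q + s).natDegree ≤ k := le_trans (natDegree_add_le _ _) (by omega)
      refine ⟨AdjoinRoot.mk p (q + s), ⟨q + s, hqs, rfl⟩, ?_⟩
      have hs : (α + 1) * AdjoinRoot.mk p s = α ^ (k+1) + α := by
        have := congrArg (AdjoinRoot.mk p) (stmt2_geom k)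
        simpa only [hsdef, map_mul, map_add, map_pow, map_one, AdjoinRoot.mk_X, ← hα] using this
      have hy : AdjoinRoot.mk p f0 = (α + 1) * AdjoinRoot.mk p q + 1 := by
        rw [← hmkf, ← hfe, hrC, hc]
        simp only [map_add, map_mul, map_one, AdjoinRoot.mk_X, C_1, ← hα]
        ring
      rw [hy]
      simp only [map_add]
      linear_combination hs + (α ^ (k+1) + α) * h2F
end

section
/- Let s₁, s₂ be positive integers with s₂ dividing s₁. Let A be an orthogonal array OA(n, m, s₁) of strength 2, and let π be any map from the s₁ symbols onto s₂ symbols such that each fiber π⁻¹(b) has exactly s₁/s₂ elements. Then the matrix π(A), obtained by applying π entrywise, is an orthogonal array OA(n, m, s₂) of strength 2. -/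
/-- An orthogonal array of strength 2. -/
def IsOA {I J S : Type*} [Fintype I] [Fintype S] [DecidableEq S]
    (M : I → J → S) : Prop :=
  ∀ j k : J, j ≠ k → ∀ a b : S,
    (Finset.univ.filter (fun i => M i j = a ∧ M i k = b)).card
      = Fintype.card I / (Fintype.card S) ^ 2

/-- Addelman–Kempthorne level collapsing: if π maps the s₁ symbols
onto s₂ symbols (s₂ ∣ s₁) with all fibers of size s₁/s₂, then applying π entrywise
to an OA(n,m,s₁) yields an OA(n,m,s₂). -/
theorem stmt6 {S₁ S₂ : Type*} [Fintype S₁] [Fintype S₂] [DecidableEq S₁] [DecidableEq S₂]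
    (hdvd : Fintype.card S₂ ∣ Fintype.card S₁) (π : S₁ → S₂)
    (hπ : ∀ b : S₂, (Finset.univ.filter (fun a : S₁ => π a = b)).card
        = Fintype.card S₁ / Fintype.card S₂)
    {n m : ℕ} (A : Fin n → Fin m → S₁) (hA : IsOA A) :
    IsOA (fun i j => π (A i j)) := by
  intro j k hjk a b
  rcases Nat.eq_zero_or_pos n with hn | hn
  · subst hn
    simp [Finset.filter_eq_empty_iff]
  have hS₁ : Nonempty S₁ := ⟨A ⟨0, hn⟩ j⟩
  set s₁ := Fintype.card S₁ with hs₁def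
  set s₂ := Fintype.card S₂ with hs₂def
  have hs₂pos : 0 < s₂ := Fintype.card_pos_iff.mpr ⟨a⟩
  have hs₁pos : 0 < s₁ := Fintype.card_pos
  have hcard : Fintype.card (Fin n) = n := Fintype.card_fin n
  -- n is a multiple of s₁²
  have hsum : (Finset.univ : Finset (Fin n)).card
      = ∑ p ∈ (Finset.univ : Finset (S₁ × S₁)),
        ((Finset.univ : Finset (Fin n)).filter
          (fun i => (A i j, A i k) = p)).card :=
    Finset.card_eq_sum_card_fiberwise (fun i _ => Finset.mem_univ _)
  have hterm : ∀ p : S₁ × S₁,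
      ((Finset.univ : Finset (Fin n)).filter (fun i => (A i j, A i k) = p)).card
        = n / s₁ ^ 2 := by
    intro p
    have := hA j k hjk p.1 p.2
    rw [hcard] at this
    rw [← this]
    congr 1
    ext i
    simp [Prod.ext_iff]
  have hn_eq : n = s₁ ^ 2 * (n / s₁ ^ 2) := by
    have h0 := hsum
    rw [Finset.card_univ, hcard] at h0
    have h2 : ∑ p : S₁ × S₁, ((Finset.univ : Finset (Fin n)).filter
          (fun i => (A i j, A i k) = p)).card = s₁ ^ 2 * (n / s₁ ^ 2) := by
      rw [Finset.sum_congr rfl (fun p _ => hterm p), Finset.sum_const,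
        Finset.card_univ, Fintype.card_prod, smul_eq_mul, ← hs₁def, sq]
    exact h0.trans h2
  -- main count
  have hmain : ((Finset.univ : Finset (Fin n)).filter
        (fun i => π (A i j) = a ∧ π (A i k) = b)).card
      = ∑ p ∈ (Finset.univ.filter (fun x : S₁ => π x = a)) ×ˢ
              (Finset.univ.filter (fun x : S₁ => π x = b)),
        (((Finset.univ : Finset (Fin n)).filter
          (fun i => π (A i j) = a ∧ π (A i k) = b)).filter
            (fun i => (A i j, A i k) = p)).card := by
    apply Finset.card_eq_sum_card_fiberwise
    intro i hi
    simp only [Finset.mem_coe, Finset.mem_filter, Finset.mem_univ, true_and] at hi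
    simp [Finset.mem_product, hi.1, hi.2]
  have hterm2 : ∀ p ∈ (Finset.univ.filter (fun x : S₁ => π x = a)) ×ˢ
              (Finset.univ.filter (fun x : S₁ => π x = b)),
      (((Finset.univ : Finset (Fin n)).filter
          (fun i => π (A i j) = a ∧ π (A i k) = b)).filter
            (fun i => (A i j, A i k) = p)).card = n / s₁ ^ 2 := by
    intro p hp
    simp only [Finset.mem_product, Finset.mem_filter, Finset.mem_univ, true_and] at hp
    rw [← hterm p]
    congr 1
    rw [Finset.filter_filter]
    ext i
    simp only [Finset.mem_filter, Finset.mem_univ, true_and, Prod.ext_iff]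
    constructor
    · rintro ⟨_, h1, h2⟩; exact ⟨h1, h2⟩
    · rintro ⟨h1, h2⟩
      exact ⟨⟨by rw [h1, hp.1], by rw [h2, hp.2]⟩, h1, h2⟩
  rw [hmain, Finset.sum_congr rfl hterm2, Finset.sum_const, Finset.card_product,
    hπ a, hπ b, smul_eq_mul, hcard]
  -- arithmetic: (s₁/s₂)*(s₁/s₂)*(n/s₁²) = n/s₂²
  obtain ⟨d, hd⟩ := hdvd
  set q := n / s₁ ^ 2 with hq
  have hds : s₁ / s₂ = d := by rw [hd]; exact Nat.mul_div_cancel_left d hs₂pos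
  rw [hds, hn_eq, hd]
  have : (s₂ * d) ^ 2 * q / s₂ ^ 2 = d ^ 2 * q := by
    rw [mul_pow, mul_assoc, Nat.mul_div_cancel_left _ (pow_pos hs₂pos 2)]
  rw [this]; ring
end

section
/- Let s₁, s₂ ≥ 1 be integers with s₂ | s₁. Let A₁ be the s₁² × 3 matrix over Z_{s₁} whose rows are all triples (i, j, −(i+j) mod s₁) for i, j ∈ {0,…,s₁−1}. Then (i) A₁ is an orthogonal array OA(s₁², 3, s₁) of strength 2; (ii) the submatrix A₂ of A₁ consisting of the rows with 0 ≤ i, j ≤ s₂−1, after reducing all entries modulo s₂, is an orthogonal array OA(s₂², 3, s₂) of strength 2. -/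
lemma zsOA_aux (s : ℕ) [NeZero s] (f g : ZMod s × ZMod s → ZMod s)
    (h : ∀ a b : ZMod s, ∃! p : ZMod s × ZMod s, f p = a ∧ g p = b) (a b : ZMod s) :
    (Finset.univ.filter (fun p => f p = a ∧ g p = b)).card = 1 := by
  obtain ⟨p, hp, hu⟩ := h a b
  rw [Finset.card_eq_one]
  exact ⟨p, by
    ext q
    simp only [Finset.mem_filter, Finset.mem_univ, true_and, Finset.mem_singleton]
    exact ⟨fun hq => hu q hq, fun hq => hq ▸ hp⟩⟩

lemma vec3_two {α : Type*} (x y z : α) (h : 2 < 3) : ![x, y, z] (⟨2, h⟩ : Fin 3) = z := rfl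

lemma zsOA (s : ℕ) [NeZero s] :
    IsOA (fun (p : ZMod s × ZMod s) (k : Fin 3) => ![p.1, p.2, -(p.1 + p.2)] k) := by
  intro j k hjk a b
  have hcard : Fintype.card (ZMod s × ZMod s) / (Fintype.card (ZMod s)) ^ 2 = 1 := by
    simp [ZMod.card, sq]
    exact Nat.div_self (Nat.mul_pos (NeZero.pos s) (NeZero.pos s))
  rw [hcard]
  fin_cases j <;> fin_cases k <;> simp only [Fin.mk_zero, Fin.mk_one, ne_eq,
    not_true_eq_false, Matrix.cons_val_zero, Matrix.cons_val_one, Matrix.head_cons,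
    Matrix.cons_val_two, Matrix.tail_cons, vec3_two] at hjk ⊢
  · exact zsOA_aux s _ _ (fun a b => ⟨(a, b), ⟨rfl, rfl⟩,
      fun q ⟨h1, h2⟩ => Prod.ext h1 h2⟩) a b
  · exact zsOA_aux s _ _ (fun a b => ⟨(a, -a - b), ⟨rfl, by ring⟩,
      fun q ⟨h1, h2⟩ => Prod.ext h1 (by linear_combination -h2 - h1)⟩) a b
  · exact zsOA_aux s _ _ (fun a b => ⟨(b, a), ⟨rfl, rfl⟩,
      fun q ⟨h1, h2⟩ => Prod.ext h2 h1⟩) a b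
  · exact zsOA_aux s _ _ (fun a b => ⟨(-a - b, a), ⟨rfl, by ring⟩,
      fun q ⟨h1, h2⟩ => Prod.ext (by linear_combination -h2 - h1) h1⟩) a b
  · exact zsOA_aux s _ _ (fun a b => ⟨(b, -a - b), ⟨by ring, rfl⟩,
      fun q ⟨h1, h2⟩ => Prod.ext h2 (by linear_combination -h1 - h2)⟩) a b
  · exact zsOA_aux s _ _ (fun a b => ⟨(-a - b, b), ⟨by ring, rfl⟩,
      fun q ⟨h1, h2⟩ => Prod.ext (by linear_combination -h1 - h2) h2⟩) a b

/-- zero-sum array: for s₂ ∣ s₁, the s₁² × 3 array over Z_{s₁} with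
rows (i, j, −(i+j)) is an OA(s₁², 3, s₁); and the subarray of rows with
i, j ∈ {0,…,s₂−1}, reduced modulo s₂, is an OA(s₂², 3, s₂). -/
theorem stmt9 (s₁ s₂ : ℕ) [NeZero s₁] [NeZero s₂] (hdvd : s₂ ∣ s₁) :
    IsOA (fun (p : ZMod s₁ × ZMod s₁) (k : Fin 3) => ![p.1, p.2, -(p.1 + p.2)] k)
    ∧
    IsOA (fun (q : ZMod s₂ × ZMod s₂) (k : Fin 3) =>
      ZMod.castHom hdvd (ZMod s₂)
        (![((q.1.val : ZMod s₁)), ((q.2.val : ZMod s₁)),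
            -(((q.1.val : ZMod s₁)) + ((q.2.val : ZMod s₁)))] k)) := by
  refine ⟨zsOA s₁, ?_⟩
  have h1 : ∀ x : ZMod s₂, ZMod.castHom hdvd (ZMod s₂) ((x.val : ZMod s₁)) = x := by
    intro x
    rw [map_natCast, ZMod.natCast_val, ZMod.cast_id]
  have heq : (fun (q : ZMod s₂ × ZMod s₂) (k : Fin 3) =>
      ZMod.castHom hdvd (ZMod s₂)
        (![((q.1.val : ZMod s₁)), ((q.2.val : ZMod s₁)),
            -(((q.1.val : ZMod s₁)) + ((q.2.val : ZMod s₁)))] k))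
      = (fun (q : ZMod s₂ × ZMod s₂) (k : Fin 3) => ![q.1, q.2, -(q.1 + q.2)] k) := by
    funext q k
    fin_cases k
    · exact h1 q.1
    · exact h1 q.2
    · show ZMod.castHom hdvd (ZMod s₂) (-(((q.1.val : ZMod s₁)) + ((q.2.val : ZMod s₁)))) = _
      rw [map_neg, map_add, h1, h1]; rfl
  rw [heq]
  exact zsOA s₂
end

section
/- Let m ≥ 2, F = GF(2^{m+1}) with irreducible polynomial x^{m+1}+x+1, and let R be the set of polynomials over GF(2) of degree at most m−2. Let D₁ be the 2^{m+1} × 4 matrix with rows indexed by elements f ∈ F and columns indexed by {0, 1, x, x+1}, with entry f·g in row f, column g. Then (i) D₁ is a difference matrix D(2^{m+1}, 4, 2^{m+1}) over F; (ii) let D₂ be the 2^m-row submatrix of D₁ with row indices in R ∪ (x^m + x^{m-1} + R), and let φ : F → GF(2^m) be the truncation map sending a₀+a₁x+⋯+a_m x^m to a₀+a₁x+⋯+a_{m-1}x^{m-1}; then φ(D₂) is a difference matrix D(2^m, 4, 2^m) over GF(2^m). -/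
open Polynomial

private abbrev P2 := Polynomial (ZMod 2)

private lemma two_zero : (2 : P2) = 0 := by
  exact_mod_cast CharP.cast_eq_zero P2 2

/-- modByMonic via explicit decomposition -/
private lemma red {q a b c : P2} {n j : ℕ} (hq : q.Monic) (hqdeg : q.degree = (n : ℕ))
    (hab : a = c * q + b) (hbn : b.natDegree ≤ j) (hj : j < n) : a %ₘ q = b := by
  have hb : b.degree < q.degree := by
    rw [hqdeg]
    calc b.degree ≤ (b.natDegree : WithBot ℕ) := degree_le_natDegree
    _ ≤ (j : WithBot ℕ) := by exact_mod_cast hbn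
    _ < (n : WithBot ℕ) := by exact_mod_cast hj
  subst hab
  rw [add_modByMonic, (modByMonic_eq_zero_iff_dvd hq).mpr ⟨c, mul_comm c q⟩, zero_add,
    (modByMonic_eq_self_iff hq).mpr hb]

private lemma mod_eq_of_dvd {q a b : P2} (hq : q.Monic) (hd : q ∣ a - b) :
    a %ₘ q = b %ₘ q := by
  have h0 := (modByMonic_eq_zero_iff_dvd hq).mpr hd
  rw [sub_modByMonic] at h0
  exact sub_eq_zero.mp h0

private lemma natdeg_drop {b : P2} {j : ℕ} (h1 : b.natDegree ≤ j + 1)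
    (h2 : b.coeff (j + 1) = 0) : b.natDegree ≤ j := by
  rw [natDegree_le_iff_coeff_eq_zero] at h1 ⊢
  intro N hN
  rcases eq_or_lt_of_le (Nat.succ_le_of_lt hN) with hE | hL
  · rwa [← hE]
  · exact h1 N hL

private lemma zmod2_cases : ∀ c : ZMod 2, c = 0 ∨ c = 1 := by decide

private lemma natdeg_le_of_deg_lt {b : P2} {n : ℕ} (h : b.degree < ((n + 1 : ℕ) : WithBot ℕ)) :
    b.natDegree ≤ n := by
  rcases eq_or_ne b 0 with rfl | hb
  · simp
  · rw [degree_eq_natDegree hb] at h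
    exact Nat.lt_succ_iff.mp (by exact_mod_cast h)

private lemma X1_ne_zero : (X + 1 : P2) ≠ 0 := fun hc => by
  simpa [coeff_one] using congrArg (fun p => coeff p 1) hc

/-- divide by X -/
private lemma divX_spec {w : P2} {j : ℕ} (h0 : w.coeff 0 = 0) (hw : w.natDegree ≤ j + 1) :
    w.divX * X = w ∧ w.divX.natDegree ≤ j := by
  constructor
  · have hd := divX_mul_X_add w
    rwa [h0, map_zero, add_zero] at hd
  · rw [natDegree_le_iff_coeff_eq_zero]
    intro N hN
    rw [coeff_divX]
    exact natDegree_le_iff_coeff_eq_zero.mp hw _ (by omega)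

/-- divide by X + 1 -/
private lemma divX1_spec {w : P2} {j : ℕ} (h0 : w.eval 1 = 0) (hw : w.natDegree ≤ j + 1) :
    ∃ q : P2, q * (X + 1) = w ∧ q.natDegree ≤ j := by
  have hx : (X + 1 : P2) = X - C 1 := by rw [C_1]; linear_combination two_zero
  obtain ⟨q, hq⟩ : (X - C 1 : P2) ∣ w := dvd_iff_isRoot.mpr h0
  refine ⟨q, by rw [hx, mul_comm]; exact hq.symm, ?_⟩
  rcases eq_or_ne q 0 with rfl | hq0
  · simp
  · have hd : w.natDegree = 1 + q.natDegree := by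
      rw [hq, natDegree_mul (by rw [← hx]; exact X1_ne_zero) hq0, natDegree_X_sub_C]
    omega

private lemma diff_mem {g g' : P2} (hg : g ∈ ({0, 1, X, X + 1} : Set P2))
    (hg' : g' ∈ ({0, 1, X, X + 1} : Set P2)) (hne : g ≠ g') :
    g - g' = 1 ∨ g - g' = X ∨ g - g' = X + 1 := by
  rw [CharTwo.sub_eq_add]
  simp only [Set.mem_insert_iff, Set.mem_singleton_iff] at hg hg'
  rcases hg with rfl | rfl | rfl | rfl <;> rcases hg' with rfl | rfl | rfl | rfl <;>
    first
      | exact absurd rfl hne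
      | (left; first | ring1 | linear_combination two_zero | linear_combination (X : P2) * two_zero)
      | (right; left; first | ring1 | linear_combination two_zero | linear_combination (X : P2) * two_zero)
      | (right; right; first | ring1 | linear_combination two_zero | linear_combination (X : P2) * two_zero)

/-- Part (i), reduced to a single nonzero small-degree multiplier. -/
private lemma part1 (m : ℕ) (p : P2) (hpm : p.Monic) (hpdeg : p.degree = ((m + 1 : ℕ) : WithBot ℕ))
    (hp : Irreducible p) (hm : 1 ≤ m) (d : P2) (hd0 : d ≠ 0) (hdd : d.natDegree ≤ 1)
    (h : P2) (hh : h.natDegree ≤ m) :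
    ∃! f : P2, f.natDegree ≤ m ∧ (f * d) %ₘ p = h := by
  have hsmall : ∀ b : P2, b.natDegree ≤ m → b %ₘ p = b := by
    intro b hb
    refine (modByMonic_eq_self_iff hpm).mpr ?_
    rw [hpdeg]
    calc b.degree ≤ (b.natDegree : WithBot ℕ) := degree_le_natDegree
    _ ≤ (m : WithBot ℕ) := by exact_mod_cast hb
    _ < ((m + 1 : ℕ) : WithBot ℕ) := by exact_mod_cast Nat.lt_succ_self m
  have hpd : ¬ p ∣ d := by
    intro hdvd
    have h1 := Polynomial.degree_le_of_dvd hdvd hd0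
    rw [hpdeg] at h1
    have h2 : d.degree ≤ ((1 : ℕ) : WithBot ℕ) :=
      degree_le_natDegree.trans (by exact_mod_cast hdd)
    have := h1.trans h2
    exact absurd (by exact_mod_cast this) (by omega)
  obtain ⟨a, b, hab⟩ := hp.coprime_iff_not_dvd.mpr hpd
  set f := (h * b) %ₘ p with hfdef
  have hfdeg : f.natDegree ≤ m := by
    apply natdeg_le_of_deg_lt
    rw [← hpdeg]
    exact degree_modByMonic_lt _ hpm
  have hprime : Prime p := hp.prime
  refine ⟨f, ⟨hfdeg, ?_⟩, ?_⟩
  · have hf : f = h * b - p * ((h * b) /ₘ p) := modByMonic_eq_sub_mul_div _ p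
    have hdvd : p ∣ f * d - h :=
      ⟨-(h * a) - ((h * b) /ₘ p) * d, by linear_combination d * hf + h * hab⟩
    rw [mod_eq_of_dvd hpm hdvd, hsmall h hh]
  · rintro f' ⟨hf'deg, hf'⟩
    have hdvd : p ∣ (f' - f) * d := by
      have h1 : (f' * d) %ₘ p = (f * d) %ₘ p := by
        rw [hf']
        have hf : f = h * b - p * ((h * b) /ₘ p) := modByMonic_eq_sub_mul_div _ p
        have hdvd : p ∣ f * d - h :=
          ⟨-(h * a) - ((h * b) /ₘ p) * d, by linear_combination d * hf + h * hab⟩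
        rw [mod_eq_of_dvd hpm hdvd, hsmall h hh]
      have h2 : p ∣ f' * d - f * d :=
        (modByMonic_eq_zero_iff_dvd hpm).mp (by rw [sub_modByMonic, h1, sub_self])
      rwa [← sub_mul] at h2
    rcases hprime.2.2 _ _ hdvd with hc | hc
    · by_contra hne
      have hne' : f' - f ≠ 0 := sub_ne_zero.mpr hne
      have h1 := Polynomial.degree_le_of_dvd hc hne'
      rw [hpdeg] at h1
      have h2 : (f' - f).degree ≤ ((m : ℕ) : WithBot ℕ) := by
        refine degree_le_natDegree.trans ?_
        exact_mod_cast (natDegree_sub_le _ _).trans (by omega)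
      have := h1.trans h2
      exact absurd (by exact_mod_cast this) (by omega)
    · exact absurd hc hpd

/-- Part (ii), reduced to a single multiplier d ∈ {1, X, X+1}. -/
private lemma part2 (k : ℕ) (d : P2) (hd : d = 1 ∨ d = X ∨ d = X + 1)
    (h : P2) (hh : h.natDegree ≤ k + 1) :
    ∃! f : P2,
      (f.natDegree ≤ k ∨ ∃ r : P2, r.natDegree ≤ k ∧ f = X ^ (k + 2) + X ^ (k + 1) + r) ∧
      ((f * d) %ₘ (X ^ (k + 3) + X + 1)) %ₘ X ^ (k + 2) = h := by
  set p : P2 := X ^ (k + 3) + X + 1 with hpdef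
  have hdx1 : (X + 1 : P2).degree = 1 := by
    have := degree_X_add_C (1 : ZMod 2)
    rwa [C_1] at this
  have hpm : p.Monic := by
    rw [hpdef, add_assoc]
    exact monic_X_pow_add (by rw [hdx1]; exact_mod_cast by omega)
  have hpdeg : p.degree = ((k + 3 : ℕ) : WithBot ℕ) := by
    rw [hpdef, add_assoc, degree_add_eq_left_of_degree_lt, degree_X_pow]
    rw [degree_X_pow, hdx1]
    exact_mod_cast by omega
  have hXm : (X ^ (k + 2) : P2).Monic := monic_X_pow _
  have hXdeg : (X ^ (k + 2) : P2).degree = ((k + 2 : ℕ) : WithBot ℕ) := degree_X_pow _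
  -- the six ψ computations
  have psiR1 : ∀ f : P2, f.natDegree ≤ k → ((f * 1) %ₘ p) %ₘ X ^ (k + 2) = f := by
    intro f hf
    rw [red hpm hpdeg (show f * 1 = 0 * p + f by ring) hf (by omega),
      red hXm hXdeg (show f = 0 * X ^ (k + 2) + f by ring) hf (by omega)]
  have psiT1 : ∀ r : P2, r.natDegree ≤ k →
      (((X ^ (k + 2) + X ^ (k + 1) + r) * 1) %ₘ p) %ₘ X ^ (k + 2) = X ^ (k + 1) + r := by
    intro r hr
    have hb : (X ^ (k + 1) + r : P2).natDegree ≤ k + 1 :=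
      (natDegree_add_le _ _).trans (by simp only [natDegree_X_pow]; omega)
    have ha : (X ^ (k + 2) + X ^ (k + 1) + r : P2).natDegree ≤ k + 2 := by
      refine (natDegree_add_le _ _).trans ?_
      refine max_le ((natDegree_add_le _ _).trans ?_) (by omega)
      simp only [natDegree_X_pow]; omega
    rw [red hpm hpdeg (show (X ^ (k + 2) + X ^ (k + 1) + r) * 1
        = 0 * p + (X ^ (k + 2) + X ^ (k + 1) + r) by ring) ha (by omega),
      red hXm hXdeg (show (X ^ (k + 2) + X ^ (k + 1) + r : P2)
        = 1 * X ^ (k + 2) + (X ^ (k + 1) + r) by ring) hb (by omega)]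
  have psiRX : ∀ f : P2, f.natDegree ≤ k → ((f * X) %ₘ p) %ₘ X ^ (k + 2) = f * X := by
    intro f hf
    have hb : (f * X : P2).natDegree ≤ k + 1 :=
      natDegree_mul_le.trans (by simp only [natDegree_X]; omega)
    rw [red hpm hpdeg (show f * X = 0 * p + f * X by ring) hb (by omega),
      red hXm hXdeg (show f * X = 0 * X ^ (k + 2) + f * X by ring) hb (by omega)]
  have psiTX : ∀ r : P2, r.natDegree ≤ k →
      (((X ^ (k + 2) + X ^ (k + 1) + r) * X) %ₘ p) %ₘ X ^ (k + 2) = r * X + X + 1 := by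
    intro r hr
    have hb2 : (r * X + X + 1 : P2).natDegree ≤ k + 1 := by
      refine (natDegree_add_le _ _).trans (max_le ((natDegree_add_le _ _).trans ?_) ?_)
      · exact max_le (natDegree_mul_le.trans (by simp only [natDegree_X]; omega))
          (by simp only [natDegree_X]; omega)
      · simp
    have hb : (X ^ (k + 2) + (r * X + X + 1) : P2).natDegree ≤ k + 2 :=
      (natDegree_add_le _ _).trans (by simp only [natDegree_X_pow]; omega)
    rw [red hpm hpdeg (show (X ^ (k + 2) + X ^ (k + 1) + r) * X
        = 1 * p + (X ^ (k + 2) + (r * X + X + 1)) by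
          rw [hpdef]; linear_combination (-(X : P2) - 1) * two_zero) hb (by omega),
      red hXm hXdeg (show (X ^ (k + 2) + (r * X + X + 1) : P2)
        = 1 * X ^ (k + 2) + (r * X + X + 1) by ring) hb2 (by omega)]
  have psiRX1 : ∀ f : P2, f.natDegree ≤ k →
      ((f * (X + 1)) %ₘ p) %ₘ X ^ (k + 2) = f * (X + 1) := by
    intro f hf
    have hb : (f * (X + 1) : P2).natDegree ≤ k + 1 :=
      natDegree_mul_le.trans (by
        have : (X + 1 : P2).natDegree = 1 := by
          have := natDegree_X_add_C (1 : ZMod 2); rwa [C_1] at this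
        omega)
    rw [red hpm hpdeg (show f * (X + 1) = 0 * p + f * (X + 1) by ring) hb (by omega),
      red hXm hXdeg (show f * (X + 1) = 0 * X ^ (k + 2) + f * (X + 1) by ring) hb (by omega)]
  have psiTX1 : ∀ r : P2, r.natDegree ≤ k →
      (((X ^ (k + 2) + X ^ (k + 1) + r) * (X + 1)) %ₘ p) %ₘ X ^ (k + 2)
        = X ^ (k + 1) + r * (X + 1) + X + 1 := by
    intro r hr
    have hrx1 : (r * (X + 1) : P2).natDegree ≤ k + 1 :=
      natDegree_mul_le.trans (by
        have : (X + 1 : P2).natDegree = 1 := by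
          have := natDegree_X_add_C (1 : ZMod 2); rwa [C_1] at this
        omega)
    have hb : (X ^ (k + 1) + r * (X + 1) + X + 1 : P2).natDegree ≤ k + 1 := by
      refine (natDegree_add_le _ _).trans (max_le ((natDegree_add_le _ _).trans ?_) ?_)
      · refine max_le ((natDegree_add_le _ _).trans ?_) (by simp only [natDegree_X]; omega)
        exact max_le (by simp only [natDegree_X_pow]; omega) hrx1
      · simp
    rw [red hpm hpdeg (show (X ^ (k + 2) + X ^ (k + 1) + r) * (X + 1)
        = 1 * p + (X ^ (k + 1) + r * (X + 1) + X + 1) by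
          rw [hpdef]; linear_combination ((X : P2) ^ (k + 2) - X - 1) * two_zero) hb (by omega),
      red hXm hXdeg (show (X ^ (k + 1) + r * (X + 1) + X + 1 : P2)
        = 0 * X ^ (k + 2) + (X ^ (k + 1) + r * (X + 1) + X + 1) by ring) hb (by omega)]
  rcases hd with rfl | rfl | rfl
  · -- d = 1
    by_cases hc : h.coeff (k + 1) = 0
    · refine ⟨h, ⟨Or.inl (natdeg_drop hh hc), psiR1 h (natdeg_drop hh hc)⟩, ?_⟩
      rintro f ⟨hmem | ⟨r, hr, rfl⟩, hcomp⟩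
      · rw [psiR1 f hmem] at hcomp; exact hcomp
      · rw [psiT1 r hr] at hcomp
        exfalso
        apply one_ne_zero (α := ZMod 2)
        calc (1 : ZMod 2) = (X ^ (k + 1) + r : P2).coeff (k + 1) := by
              simp [coeff_X_pow,
                coeff_eq_zero_of_natDegree_lt (lt_of_le_of_lt hr (Nat.lt_succ_self k))]
        _ = h.coeff (k + 1) := by rw [hcomp]
        _ = 0 := hc
    · have hc1 : h.coeff (k + 1) = 1 := (zmod2_cases _).resolve_left hc
      have hr0 : (h - X ^ (k + 1) : P2).natDegree ≤ k := by
        refine natdeg_drop ((natDegree_sub_le _ _).trans ?_) ?_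
        · simp only [natDegree_X_pow]; omega
        · simp [coeff_X_pow, hc1]
      refine ⟨X ^ (k + 2) + X ^ (k + 1) + (h - X ^ (k + 1)), ⟨Or.inr ⟨_, hr0, rfl⟩, ?_⟩, ?_⟩
      · rw [psiT1 _ hr0]; ring
      · rintro f ⟨hmem | ⟨r, hr, rfl⟩, hcomp⟩
        · rw [psiR1 f hmem] at hcomp
          exact absurd (hcomp ▸ coeff_eq_zero_of_natDegree_lt (lt_of_le_of_lt hmem (by omega))) hc
        · rw [psiT1 r hr] at hcomp
          have : r = h - X ^ (k + 1) := by linear_combination hcomp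
          rw [this]
  · -- d = X
    by_cases hc : h.coeff 0 = 0
    · obtain ⟨hq, hqd⟩ := divX_spec hc hh
      refine ⟨h.divX, ⟨Or.inl hqd, by rw [psiRX _ hqd, hq]⟩, ?_⟩
      rintro f ⟨hmem | ⟨r, hr, rfl⟩, hcomp⟩
      · rw [psiRX f hmem] at hcomp
        exact mul_right_cancel₀ X_ne_zero (by rw [hcomp, hq])
      · rw [psiTX r hr] at hcomp
        exfalso
        apply one_ne_zero (α := ZMod 2)
        calc (1 : ZMod 2) = (r * X + X + 1 : P2).coeff 0 := by
              simp [coeff_add, mul_coeff_zero, coeff_X_zero, coeff_one]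
        _ = h.coeff 0 := by rw [hcomp]
        _ = 0 := hc
    · have hc1 : h.coeff 0 = 1 := (zmod2_cases _).resolve_left hc
      have hw0 : (h - X - 1 : P2).coeff 0 = 0 := by
        simp [coeff_sub, coeff_X_zero, coeff_one, hc1]
      have hwd : (h - X - 1 : P2).natDegree ≤ k + 1 := by
        refine (natDegree_sub_le _ _).trans (max_le ((natDegree_sub_le _ _).trans ?_) ?_)
        · simp only [natDegree_X]; omega
        · simp
      obtain ⟨hq, hqd⟩ := divX_spec hw0 hwd
      refine ⟨X ^ (k + 2) + X ^ (k + 1) + (h - X - 1).divX, ⟨Or.inr ⟨_, hqd, rfl⟩, ?_⟩, ?_⟩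
      · rw [psiTX _ hqd]; linear_combination hq
      · rintro f ⟨hmem | ⟨r, hr, rfl⟩, hcomp⟩
        · rw [psiRX f hmem] at hcomp
          exfalso
          apply hc
          rw [← hcomp, mul_coeff_zero, coeff_X_zero, mul_zero]
        · rw [psiTX r hr] at hcomp
          have : r * X = (h - X - 1).divX * X := by rw [hq]; linear_combination hcomp
          rw [mul_right_cancel₀ X_ne_zero this]
  · -- d = X + 1
    have heval2 : ((X + 1 : P2)).eval 1 = 0 := by
      simp only [eval_add, eval_X, eval_one]
      decide
    by_cases hc : h.eval 1 = 0
    · obtain ⟨q, hq, hqd⟩ := divX1_spec hc hh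
      refine ⟨q, ⟨Or.inl hqd, by rw [psiRX1 _ hqd, hq]⟩, ?_⟩
      rintro f ⟨hmem | ⟨r, hr, rfl⟩, hcomp⟩
      · rw [psiRX1 f hmem] at hcomp
        exact mul_right_cancel₀ X1_ne_zero (by rw [hcomp, hq])
      · rw [psiTX1 r hr] at hcomp
        exfalso
        apply one_ne_zero (α := ZMod 2)
        calc (1 : ZMod 2) = (X ^ (k + 1) + r * (X + 1) + X + 1 : P2).eval 1 := by
              simp only [eval_add, eval_mul, eval_pow, eval_X, eval_one, one_pow]
              rcases zmod2_cases (r.eval 1) with hv | hv <;> rw [hv] <;> decide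
        _ = h.eval 1 := by rw [hcomp]
        _ = 0 := hc
    · have hc1 : h.eval 1 = 1 := (zmod2_cases _).resolve_left hc
      have hw0 : (h - X ^ (k + 1) - X - 1 : P2).eval 1 = 0 := by
        simp only [eval_sub, eval_pow, eval_X, eval_one, one_pow, hc1]
        decide
      have hwd : (h - X ^ (k + 1) - X - 1 : P2).natDegree ≤ k + 1 := by
        refine (natDegree_sub_le _ _).trans
          (max_le ((natDegree_sub_le _ _).trans
            (max_le ((natDegree_sub_le _ _).trans ?_) ?_)) ?_)
        · simp only [natDegree_X_pow]; omega
        · simp only [natDegree_X]; omega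
        · simp
      obtain ⟨q, hq, hqd⟩ := divX1_spec hw0 hwd
      refine ⟨X ^ (k + 2) + X ^ (k + 1) + q, ⟨Or.inr ⟨_, hqd, rfl⟩, ?_⟩, ?_⟩
      · rw [psiTX1 _ hqd]; linear_combination hq
      · rintro f ⟨hmem | ⟨r, hr, rfl⟩, hcomp⟩
        · rw [psiRX1 f hmem] at hcomp
          exfalso
          apply hc
          rw [← hcomp, eval_mul, heval2, mul_zero]
        · rw [psiTX1 r hr] at hcomp
          have : r * (X + 1) = q * (X + 1) := by rw [hq]; linear_combination hcomp
          rw [mul_right_cancel₀ X1_ne_zero this]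

/-- Theorem 1 of the paper. Work in F = GF(2^{m+1}) =
GF(2)[x]/(x^{m+1}+x+1), elements represented by polynomials of degree ≤ m
(reduction is `%ₘ p`). (i) The multiplication table with rows f ∈ F and columns
g ∈ {0,1,x,x+1} is a difference matrix D(2^{m+1}, 4, 2^{m+1}): for distinct
columns every element of F occurs exactly once among the differences.
(ii) Restricting rows to R ∪ (x^m + x^{m-1} + R), where R is the set of
polynomials of degree ≤ m−2, and truncating entries to degree < m (i.e. `%ₘ X^m`,
the truncation projection φ into GF(2^m)), gives a difference matrix
D(2^m, 4, 2^m): every polynomial of degree ≤ m−1 occurs exactly once. -/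
theorem stmt12 (m : ℕ) (hm : 2 ≤ m)
    (p : Polynomial (ZMod 2)) (hpdef : p = X ^ (m + 1) + X + 1) (hp : Irreducible p) :
    (∀ g ∈ ({0, 1, X, X + 1} : Set (Polynomial (ZMod 2))),
      ∀ g' ∈ ({0, 1, X, X + 1} : Set (Polynomial (ZMod 2))), g ≠ g' →
        ∀ h : Polynomial (ZMod 2), h.natDegree ≤ m →
          ∃! f : Polynomial (ZMod 2),
            f.natDegree ≤ m ∧ (f * g) %ₘ p - (f * g') %ₘ p = h)
    ∧
    (∀ g ∈ ({0, 1, X, X + 1} : Set (Polynomial (ZMod 2))),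
      ∀ g' ∈ ({0, 1, X, X + 1} : Set (Polynomial (ZMod 2))), g ≠ g' →
        ∀ h : Polynomial (ZMod 2), h.natDegree ≤ m - 1 →
          ∃! f : Polynomial (ZMod 2),
            (f.natDegree ≤ m - 2 ∨
              ∃ r : Polynomial (ZMod 2), r.natDegree ≤ m - 2 ∧
                f = X ^ m + X ^ (m - 1) + r) ∧
            ((f * g) %ₘ p) %ₘ X ^ m - ((f * g') %ₘ p) %ₘ X ^ m = h) := by
  obtain ⟨k, rfl⟩ : ∃ k, m = k + 2 := ⟨m - 2, by omega⟩
  have hpm : p.Monic := by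
    rw [hpdef, add_assoc]
    refine monic_X_pow_add ?_
    have hdx1 : (X + 1 : P2).degree = 1 := by
      have := degree_X_add_C (1 : ZMod 2); rwa [C_1] at this
    rw [hdx1]; exact_mod_cast by omega
  have hpdeg : p.degree = ((k + 2 + 1 : ℕ) : WithBot ℕ) := by
    have hdx1 : (X + 1 : P2).degree = 1 := by
      have := degree_X_add_C (1 : ZMod 2); rwa [C_1] at this
    rw [hpdef, add_assoc, degree_add_eq_left_of_degree_lt, degree_X_pow]
    rw [degree_X_pow, hdx1]
    exact_mod_cast by omega
  constructor
  · intro g hg g' hg' hne h hh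
    have hd := diff_mem hg hg' hne
    have hd0 : g - g' ≠ 0 := sub_ne_zero.mpr hne
    have hdd : (g - g').natDegree ≤ 1 := by
      rcases hd with h1 | h1 | h1 <;> rw [h1]
      · simp
      · simp [natDegree_X]
      · have := natDegree_X_add_C (1 : ZMod 2)
        rw [C_1] at this
        omega
    simp only [← sub_modByMonic, ← mul_sub]
    exact part1 (k + 2) p hpm hpdeg hp (by omega) (g - g') hd0 hdd h hh
  · intro g hg g' hg' hne h hh
    have hd := diff_mem hg hg' hne
    have hh' : h.natDegree ≤ k + 1 := by
      have : k + 2 - 1 = k + 1 := by omega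
      omega
    simp only [show k + 2 - 1 = k + 1 from by omega, show k + 2 - 2 = k from by omega,
      ← sub_modByMonic, ← mul_sub]
    have hexp : k + 2 + 1 = k + 3 := by omega
    rw [hpdef, hexp] at *
    exact part2 k (g - g') hd h hh'
end

section
/- For j = 1, 2 let D_j be a difference matrix D(b_j, c_j, s_j) over the group G_j of order s_j, partitioned as D_j = [D_{j0}, D_{j1}] where D_{10} and D_{20} both have c₀ columns (1 ≤ c₀ ≤ min(c₁, c₂)). Define D₀ as the b₁b₂ × c₀ matrix over G₁ × G₂ whose ((i−1)b₂+j, k) entry is (α_{i,k}, β_{j,k}), where α, β are entries of D₁, D₂. Then: (i) D₀ is a difference matrix D(b₁b₂, c₀, s₁s₂) over G₁ × G₂; (ii) the matrix D₁₁* whose ((i−1)b₂+j)-th row is the i-th row of D₁₁ is a difference matrix D(b₁b₂, c₁−c₀, s₁), and similarly D₂₁* (with ((i−1)b₂+j)-th row equal to the j-th row of D₂₁) is a D(b₁b₂, c₂−c₀, s₂); (iii) the augmented matrix [σ₁(D₀), D₁₁*] is a difference matrix D(b₁b₂, c₁, s₁), where σ₁ takes the first component of each entry, and analogously [σ₂(D₀),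 D₂₁*] is a D(b₁b₂, c₂, s₂). -/
/-- A difference matrix over a finite abelian group. -/
def IsDM {I J G : Type*} [Fintype I] [AddCommGroup G] [Fintype G] [DecidableEq G]
    (D : I → J → G) : Prop :=
  ∀ j k : J, j ≠ k → ∀ g : G,
    (Finset.univ.filter (fun i => D i j - D i k = g)).card
      = Fintype.card I / Fintype.card G

section Aux
variable {I I₂ J G : Type*} [Fintype I] [Fintype I₂] [AddCommGroup G] [Fintype G]
  [DecidableEq G]

lemma dm_dvd {D : I → J → G} (h : IsDM D) {j k : J} (hjk : j ≠ k) :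
    Fintype.card G ∣ Fintype.card I := by
  have hsum := Finset.card_eq_sum_card_fiberwise
    (f := fun i => D i j - D i k) (s := Finset.univ) (t := Finset.univ)
    (fun x _ => Finset.mem_univ _)
  simp only [h j k hjk, Finset.sum_const, smul_eq_mul, Finset.card_univ] at hsum
  exact ⟨_, hsum⟩

lemma filter_fst {P : I → Prop} [DecidablePred P] :
    (Finset.univ.filter (fun p : I × I₂ => P p.1)).card
      = (Finset.univ.filter P).card * Fintype.card I₂ := by
  rw [show Finset.univ.filter (fun p : I × I₂ => P p.1)
      = (Finset.univ.filter P) ×ˢ Finset.univ by ext p; simp,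
    Finset.card_product, Finset.card_univ]

lemma filter_snd {P : I₂ → Prop} [DecidablePred P] :
    (Finset.univ.filter (fun p : I × I₂ => P p.2)).card
      = Fintype.card I * (Finset.univ.filter P).card := by
  rw [show Finset.univ.filter (fun p : I × I₂ => P p.2)
      = Finset.univ ×ˢ (Finset.univ.filter P) by ext p; simp,
    Finset.card_product, Finset.card_univ]

lemma IsDM.fst {D : I → J → G} (h : IsDM D) :
    IsDM (fun (p : I × I₂) (j : J) => D p.1 j) := by
  intro j k hjk g
  obtain ⟨a, ha⟩ := dm_dvd h hjk
  show (Finset.univ.filter (fun p : I × I₂ => D p.1 j - D p.1 k = g)).card = _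
  rw [filter_fst (P := fun i => D i j - D i k = g), h j k hjk g, Fintype.card_prod, ha,
    Nat.mul_div_cancel_left _ Fintype.card_pos, mul_assoc,
    Nat.mul_div_cancel_left _ Fintype.card_pos]

lemma IsDM.snd {D : I₂ → J → G} (h : IsDM D) :
    IsDM (fun (p : I × I₂) (j : J) => D p.2 j) := by
  intro j k hjk g
  obtain ⟨a, ha⟩ := dm_dvd h hjk
  show (Finset.univ.filter (fun p : I × I₂ => D p.2 j - D p.2 k = g)).card = _
  rw [filter_snd (P := fun i => D i j - D i k = g), h j k hjk g, Fintype.card_prod, ha,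
    Nat.mul_div_cancel_left _ Fintype.card_pos,
    Nat.mul_div_assoc _ ⟨a, rfl⟩, Nat.mul_div_cancel_left _ Fintype.card_pos]

lemma IsDM.comp {J' : Type*} {D : I → J → G} (h : IsDM D) {f : J' → J}
    (hf : Function.Injective f) : IsDM (fun i j' => D i (f j')) :=
  fun j k hjk g => h (f j) (f k) (fun e => hjk (hf e)) g

end Aux


/-- Lemma 7 of the paper. Let D_j = [D_{j0}, D_{j1}] be a
difference matrix D(b_j, c₀ + d_j, s_j) over G_j (j = 1, 2), with the first c₀
columns indexed by `Sum.inl`. Then: (i) the b₁b₂ × c₀ matrix D₀ over G₁ × G₂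
with ((i,j),k) entry (D₁ i (inl k), D₂ j (inl k)) is a difference matrix
D(b₁b₂, c₀, s₁s₂); (ii) the matrices D₁₁*, D₂₁* obtained by repeating the rows of
D₁₁ (resp. D₂₁) are difference matrices D(b₁b₂, d₁, s₁) and D(b₁b₂, d₂, s₂);
(iii) the augmented matrices [σ₁(D₀), D₁₁*] and [σ₂(D₀), D₂₁*] are difference
matrices D(b₁b₂, c₀ + d₁, s₁) and D(b₁b₂, c₀ + d₂, s₂). -/
theorem stmt15 {G₁ G₂ : Type*} [AddCommGroup G₁] [AddCommGroup G₂]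
    [Fintype G₁] [Fintype G₂] [DecidableEq G₁] [DecidableEq G₂]
    {b₁ b₂ c₀ d₁ d₂ : ℕ} (hc₀ : 1 ≤ c₀)
    (D₁ : Fin b₁ → (Fin c₀ ⊕ Fin d₁) → G₁) (hD₁ : IsDM D₁)
    (D₂ : Fin b₂ → (Fin c₀ ⊕ Fin d₂) → G₂) (hD₂ : IsDM D₂) :
    IsDM (fun (p : Fin b₁ × Fin b₂) (k : Fin c₀) =>
      ((D₁ p.1 (Sum.inl k), D₂ p.2 (Sum.inl k)) : G₁ × G₂))
    ∧
    IsDM (fun (p : Fin b₁ × Fin b₂) (k : Fin d₁) => D₁ p.1 (Sum.inr k))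
    ∧
    IsDM (fun (p : Fin b₁ × Fin b₂) (k : Fin d₂) => D₂ p.2 (Sum.inr k))
    ∧
    IsDM (fun (p : Fin b₁ × Fin b₂) (k : Fin c₀ ⊕ Fin d₁) => D₁ p.1 k)
    ∧
    IsDM (fun (p : Fin b₁ × Fin b₂) (k : Fin c₀ ⊕ Fin d₂) => D₂ p.2 k) := by
  refine ⟨?_, (hD₁.comp Sum.inr_injective).fst, (hD₂.comp Sum.inr_injective).snd,
    hD₁.fst, hD₂.snd⟩
  · intro j k hjk g
    have hj : (Sum.inl j : Fin c₀ ⊕ Fin d₁) ≠ Sum.inl k := by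
      simpa using hjk
    have hj' : (Sum.inl j : Fin c₀ ⊕ Fin d₂) ≠ Sum.inl k := by
      simpa using hjk
    have key : Finset.univ.filter (fun p : Fin b₁ × Fin b₂ =>
        ((D₁ p.1 (Sum.inl j), D₂ p.2 (Sum.inl j)) : G₁ × G₂)
          - (D₁ p.1 (Sum.inl k), D₂ p.2 (Sum.inl k)) = g)
        = (Finset.univ.filter (fun i => D₁ i (Sum.inl j) - D₁ i (Sum.inl k) = g.1))
          ×ˢ (Finset.univ.filter (fun i => D₂ i (Sum.inl j) - D₂ i (Sum.inl k) = g.2)) := by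
      ext p
      simp [Prod.ext_iff, and_comm]
    rw [key, Finset.card_product, hD₁ _ _ hj g.1, hD₂ _ _ hj' g.2,
      Nat.div_mul_div_comm (dm_dvd hD₁ hj) (dm_dvd hD₂ hj'),
      Fintype.card_prod, Fintype.card_prod]
end
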